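/- If M_z ∈ L(H_K)^d is a K-contraction, then (1/K)(M_z) = SOT-Σ_{n=0}^∞ c_n σ_{M_z}^n(1_{H_K}) equals the orthogonal projection P_ℂ of H_K onto the one-dimensional subspace of constant functions; moreover for α, β ∈ ℕ^d, the operator M_z^α P_ℂ M_z^{*β} is the rank-one operator z^α ⊗ z^β sending K(·,w) to \bar{w}^β z^α. -/

import Mathlib

open Filter Topology
open scoped InnerProductSpace

/-- if `M_z ∈ L(H_K)^d` is a K-contraction, then
`(1/K)(M_z) = SOT-Σ cₙ σ_{M_z}ⁿ(1)` is the orthogonal projection `P_ℂ` onto the constants,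
and `M_z^α P_ℂ M_z^{*β}` is the rank-one operator sending `K(·,w)` to `w̄^β z^α`. -/
theorem stmt13 {d : ℕ} {HK : Type*}
    [NormedAddCommGroup HK] [InnerProductSpace ℂ HK] [CompleteSpace HK]
    (a : ℕ → ℝ) (ha0 : a 0 = 1) (hapos : ∀ n, 0 < a n)
    (m M : ℝ) (hm : 0 < m) (hbd : ∀ n, m ≤ a n / a (n + 1) ∧ a n / a (n + 1) ≤ M)
    -- the scalar functional Hilbert space H_K with kernel K(z,w) = Σ aₙ⟨z,w⟩ⁿ
    (ev : EuclideanSpace ℂ (Fin d) → (HK →L[ℂ] ℂ))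
    (hsep : ∀ f : HK, (∀ z, ‖z‖ < 1 → ev z f = 0) → f = 0)
    (hkernel : ∀ z w : EuclideanSpace ℂ (Fin d), ‖z‖ < 1 → ‖w‖ < 1 → ∀ x : ℂ,
      HasSum (fun n => ((a n : ℂ) * ⟪w, z⟫_ℂ ^ n) • x) (ev z ((ev w).adjoint x)))
    (Mz : Fin d → HK →L[ℂ] HK)
    (hMz : ∀ (i) (z), ‖z‖ < 1 → ∀ f, ev z (Mz i f) = z i • ev z f)
    (hMzc : ∀ i j, Commute (Mz i) (Mz j))
    -- the constant function 1
    (e1 : HK) (he1 : ∀ z, ‖z‖ < 1 → ev z e1 = 1)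
    -- 1/k(z) = Σ cₙ zⁿ and M_z is a K-contraction with (1/K)(M_z) = D0 ≥ 0
    (c : ℕ → ℝ) (hc0 : c 0 = 1)
    (hcauchy : ∀ n, 1 ≤ n → ∑ j ∈ Finset.range (n + 1), a j * c (n - j) = 0)
    (σit : (HK →L[ℂ] HK) → ℕ → (HK →L[ℂ] HK))
    (hσ0 : ∀ X, σit X 0 = X)
    (hσs : ∀ X n, σit X (n + 1) = ∑ i, Mz i ∘L σit X n ∘L (Mz i).adjoint)
    (D0 : HK →L[ℂ] HK) (hD0pos : D0.IsPositive)
    (hD0 : ∀ f : HK, HasSum (fun n => ((c n : ℝ) : ℂ) • σit 1 n f) (D0 f)) :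
    -- (1/K)(M_z) is the orthogonal projection onto the constants
    (∀ f : HK, D0 f ∈ Submodule.span ℂ {e1} ∧ f - D0 f ∈ (Submodule.span ℂ {e1})ᗮ) ∧
    -- M_z^α P_ℂ M_z^{*β} is the rank-one operator z^α ⊗ z^β
    (∀ (α β : Fin d → ℕ) (w : EuclideanSpace ℂ (Fin d)), ‖w‖ < 1 →
      (Finset.univ.noncommProd (fun i => Mz i ^ α i)
          (fun i _ j _ _ => (hMzc i j).pow_pow (α i) (α j)))
        (D0 ((Finset.univ.noncommProd (fun i => Mz i ^ β i)
          (fun i _ j _ _ => (hMzc i j).pow_pow (β i) (β j))).adjoint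
            ((ev w).adjoint 1))) =
      (∏ i, (starRingEnd ℂ) (w i) ^ β i) •
        (Finset.univ.noncommProd (fun i => Mz i ^ α i)
          (fun i _ j _ _ => (hMzc i j).pow_pow (α i) (α j))) e1) := by
  classical
  set kv : EuclideanSpace ℂ (Fin d) → HK := fun w => (ev w).adjoint 1 with hkv
  -- evaluation against kernel vectors
  have hker_eval : ∀ (w : EuclideanSpace ℂ (Fin d)) (f : HK), ⟪kv w, f⟫_ℂ = ev w f := by
    intro w f
    simp only [hkv]
    rw [ContinuousLinearMap.adjoint_inner_left, RCLike.inner_apply]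
    simp
  -- adjoints of the multipliers act on kernel vectors by conjugated eigenvalues
  have hMzadj : ∀ (i) (w : EuclideanSpace ℂ (Fin d)), ‖w‖ < 1 →
      (Mz i).adjoint (kv w) = (starRingEnd ℂ) (w i) • kv w := by
    intro i w hw
    apply ext_inner_right ℂ
    intro f
    rw [ContinuousLinearMap.adjoint_inner_left, hker_eval, hMz i w hw, inner_smul_left,
      hker_eval]
    simp [smul_eq_mul]
  -- evaluation of σ-iterates on kernel vectors
  have hσ_eval : ∀ (z w : EuclideanSpace ℂ (Fin d)), ‖z‖ < 1 → ‖w‖ < 1 → ∀ n,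
      ev z (σit 1 n (kv w)) = ⟪w, z⟫_ℂ ^ n * ev z (kv w) := by
    intro z w hz hw n
    induction n with
    | zero => simp [hσ0]
    | succ n ih =>
      have hinner : ⟪w, z⟫_ℂ = ∑ i, (starRingEnd ℂ) (w i) * z i := by
        simp [PiLp.inner_apply, RCLike.inner_apply]
        exact Finset.sum_congr rfl fun _ _ => mul_comm _ _
      have h1 : (σit 1 (n + 1)) (kv w)
          = ∑ i, (starRingEnd ℂ) (w i) • Mz i (σit 1 n (kv w)) := by
        rw [hσs, ContinuousLinearMap.sum_apply]
        refine Finset.sum_congr rfl fun i _ => ?_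
        rw [ContinuousLinearMap.comp_apply, ContinuousLinearMap.comp_apply, hMzadj i w hw,
          map_smul, map_smul]
      rw [h1, map_sum]
      have h2 : ∀ i ∈ Finset.univ, ev z ((starRingEnd ℂ) (w i) • Mz i (σit 1 n (kv w)))
          = ((starRingEnd ℂ) (w i) * z i) * (⟪w, z⟫_ℂ ^ n * ev z (kv w)) := by
        intro i _
        rw [map_smul, hMz i z hz, ih]
        simp only [smul_eq_mul]
        ring
      rw [Finset.sum_congr rfl h2, ← Finset.sum_mul, ← hinner, pow_succ]
      ring
  -- absolute summability of both power series at interior points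
  have hsum_norms : ∀ (z w : EuclideanSpace ℂ (Fin d)), ‖z‖ < 1 → ‖w‖ < 1 →
      (Summable fun n => ‖(a n : ℂ) * ⟪w, z⟫_ℂ ^ n‖) ∧
      (Summable fun n => ‖(c n : ℂ) * ⟪w, z⟫_ℂ ^ n‖) := by
    intro z w hz hw
    set t : ℂ := ⟪w, z⟫_ℂ with ht
    by_cases h0 : t = 0
    · constructor <;>
      · refine summable_of_ne_finset_zero (s := {0}) fun n hn => ?_
        simp only [Finset.mem_singleton] at hn
        rw [h0, zero_pow hn, mul_zero, norm_zero]
    · have hwne : w ≠ 0 := by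
        rintro rfl
        exact h0 (by simp [ht])
      have htle : ‖t‖ ≤ ‖w‖ * ‖z‖ := norm_inner_le_norm w z
      have htlt : ‖t‖ < 1 := by nlinarith [norm_nonneg z, norm_nonneg w, norm_nonneg t]
      set r : ℝ := Real.sqrt ‖t‖ with hr
      have hr0 : 0 ≤ r := Real.sqrt_nonneg _
      have hrr : r * r = ‖t‖ := Real.mul_self_sqrt (norm_nonneg t)
      have hwpos : 0 < ‖w‖ := norm_pos_iff.mpr hwne
      set w₀ : EuclideanSpace ℂ (Fin d) := ((r / ‖w‖ : ℝ) : ℂ) • w with hw₀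
      have hnw₀ : ‖w₀‖ = r := by
        rw [hw₀, norm_smul, Complex.norm_real, Real.norm_eq_abs,
          abs_of_nonneg (div_nonneg hr0 hwpos.le)]
        field_simp
      have hr1 : r < 1 := by nlinarith
      have hw₀lt : ‖w₀‖ < 1 := by rw [hnw₀]; exact hr1
      have hinn : ⟪w₀, w₀⟫_ℂ = ((‖t‖ : ℝ) : ℂ) := by
        rw [inner_self_eq_norm_sq_to_K, hnw₀]
        push_cast [← hrr]
        ring_nf
        norm_cast
      -- the `a`-series at the real point ‖t‖
      have hA : HasSum (fun n => (((a n * ‖t‖ ^ n : ℝ)) : ℂ)) (ev w₀ (kv w₀)) := by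
        have h := hkernel w₀ w₀ hw₀lt hw₀lt 1
        rw [hinn] at h
        have heq : (fun n => ((a n : ℂ) * ((‖t‖ : ℝ) : ℂ) ^ n) • (1 : ℂ))
            = fun n => (((a n * ‖t‖ ^ n : ℝ)) : ℂ) := by
          funext n
          rw [smul_eq_mul, mul_one]
          push_cast
          ring
        rw [heq] at h
        exact h
      have hAre : HasSum (fun n => a n * ‖t‖ ^ n) (ev w₀ (kv w₀)).re := by
        have h := hA.mapL Complex.reCLM
        have heq : (fun n => Complex.reCLM (((a n * ‖t‖ ^ n : ℝ)) : ℂ))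
            = fun n => a n * ‖t‖ ^ n := by
          funext n
          simp only [Complex.reCLM_apply, Complex.ofReal_re]
        rw [heq] at h
        exact h
      have hApos : ∀ n, 0 ≤ a n * ‖t‖ ^ n := fun n =>
        mul_nonneg (hapos n).le (pow_nonneg (norm_nonneg t) n)
      have hKre : (1 : ℝ) ≤ (ev w₀ (kv w₀)).re := by
        have h := le_hasSum hAre 0 fun j _ => hApos j
        simpa [ha0] using h
      have hKne : ev w₀ (kv w₀) ≠ 0 := by
        intro h
        rw [h] at hKre
        norm_num at hKre
      -- the `c`-series at the real point ‖t‖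
      have hC : HasSum (fun n => (c n : ℂ) * (((‖t‖ : ℝ) : ℂ) ^ n * ev w₀ (kv w₀)))
          (ev w₀ (D0 (kv w₀))) := by
        have h := (hD0 (kv w₀)).mapL (ev w₀)
        have heq : (fun n => ev w₀ (((c n : ℝ) : ℂ) • σit 1 n (kv w₀)))
            = fun n => (c n : ℂ) * (((‖t‖ : ℝ) : ℂ) ^ n * ev w₀ (kv w₀)) := by
          funext n
          rw [map_smul, hσ_eval w₀ w₀ hw₀lt hw₀lt, hinn, smul_eq_mul]
        rw [heq] at h
        exact h
      have hCsum : Summable fun n => (c n : ℂ) * ((‖t‖ : ℝ) : ℂ) ^ n := by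
        have h1 := hC.summable.mul_right (ev w₀ (kv w₀))⁻¹
        refine h1.congr fun n => ?_
        field_simp
      have hCre : Summable fun n => c n * ‖t‖ ^ n := by
        have h := (hCsum.hasSum.mapL Complex.reCLM).summable
        refine h.congr fun n => ?_
        rw [← Complex.ofReal_pow, ← Complex.ofReal_mul]
        simp only [Complex.reCLM_apply, Complex.ofReal_re]
      constructor
      · refine hAre.summable.congr fun n => ?_
        rw [norm_mul, norm_pow, Complex.norm_real, Real.norm_eq_abs,
          abs_of_pos (hapos n)]
      · refine hCre.abs.congr fun n => ?_
        rw [abs_mul, abs_pow, abs_of_nonneg (norm_nonneg t), norm_mul, norm_pow,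
          Complex.norm_real, Real.norm_eq_abs]
  -- the key identity : D0 maps kernel vectors to the constant function 1
  have hD0kv : ∀ (w : EuclideanSpace ℂ (Fin d)), ‖w‖ < 1 → D0 (kv w) = e1 := by
    intro w hw
    have hval : ∀ z, ‖z‖ < 1 → ev z (D0 (kv w)) = 1 := by
      intro z hz
      set t : ℂ := ⟪w, z⟫_ℂ with ht
      set K : ℂ := ev z (kv w) with hK
      have hA : HasSum (fun n => (a n : ℂ) * t ^ n) K := by
        have h := hkernel z w hz hw 1
        have heq : (fun n => ((a n : ℂ) * t ^ n) • (1 : ℂ))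
            = fun n => (a n : ℂ) * t ^ n := by
          funext n
          rw [smul_eq_mul, mul_one]
        rw [← ht, heq] at h
        exact h
      have hC : HasSum (fun n => ((c n : ℂ) * t ^ n) * K) (ev z (D0 (kv w))) := by
        have h := (hD0 (kv w)).mapL (ev z)
        have heq : (fun n => ev z (((c n : ℝ) : ℂ) • σit 1 n (kv w)))
            = fun n => ((c n : ℂ) * t ^ n) * K := by
          funext n
          rw [map_smul, hσ_eval z w hz hw, smul_eq_mul, ← ht, ← hK]
          ring
        rw [heq] at h
        exact h
      obtain ⟨hnA, hnC⟩ := hsum_norms z w hz hw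
      rw [← ht] at hnA hnC
      have hS : HasSum (fun n => (c n : ℂ) * t ^ n) (∑' n, (c n : ℂ) * t ^ n) :=
        hnC.of_norm.hasSum
      have hprod := tsum_mul_tsum_eq_tsum_sum_range_of_summable_norm hnC hnA
      have hdiag : ∀ n : ℕ, (∑ k ∈ Finset.range (n + 1),
          ((c k : ℂ) * t ^ k) * ((a (n - k) : ℂ) * t ^ (n - k)))
          = if n = 0 then 1 else 0 := by
        intro n
        have h1 : ∀ k ∈ Finset.range (n + 1),
            ((c k : ℂ) * t ^ k) * ((a (n - k) : ℂ) * t ^ (n - k))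
            = ((a (n - k) * c k : ℝ) : ℂ) * t ^ n := by
          intro k hk
          rw [Finset.mem_range] at hk
          have hkk : t ^ k * t ^ (n - k) = t ^ n := by
            rw [← pow_add]
            congr 1
            omega
          push_cast
          rw [← hkk]
          ring
        rw [Finset.sum_congr rfl h1, ← Finset.sum_mul, ← Complex.ofReal_sum]
        rcases Nat.eq_zero_or_pos n with rfl | hn
        · simp [ha0, hc0]
        · have h3 : ∑ k ∈ Finset.range (n + 1), a (n - k) * c k
              = ∑ j ∈ Finset.range (n + 1), a j * c (n - j) := by
            rw [← Finset.sum_range_reflect]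
            refine Finset.sum_congr rfl fun j hj => ?_
            rw [Finset.mem_range] at hj
            congr 2 <;> omega
          rw [h3, hcauchy n hn]
          simp [Nat.pos_iff_ne_zero.mp hn]
      have hCval : ev z (D0 (kv w)) = (∑' n, (c n : ℂ) * t ^ n) * K :=
        HasSum.unique hC (hS.mul_right K)
      rw [hCval]
      calc (∑' n, (c n : ℂ) * t ^ n) * K
          = (∑' n, (c n : ℂ) * t ^ n) * (∑' n, (a n : ℂ) * t ^ n) := by rw [hA.tsum_eq]
        _ = ∑' (n : ℕ), ∑ k ∈ Finset.range (n + 1),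
              ((c k : ℂ) * t ^ k) * ((a (n - k) : ℂ) * t ^ (n - k)) := hprod
        _ = ∑' (n : ℕ), if n = 0 then (1 : ℂ) else 0 := tsum_congr hdiag
        _ = 1 := tsum_ite_eq 0 1
    have h := hsep (D0 (kv w) - e1) fun z hz => by
      rw [map_sub, hval z hz, he1 z hz, sub_self]
    exact sub_eq_zero.mp h
  -- `e1` is the kernel vector at 0, and it is a unit vector
  have he1k : e1 = kv 0 := by
    have hval : ∀ z, ‖z‖ < 1 → ev z (kv 0) = 1 := by
      intro z hz
      have h1 := hkernel z 0 hz (by simp) 1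
      have h2 : (fun n : ℕ => ((a n : ℂ) * ⟪(0 : EuclideanSpace ℂ (Fin d)), z⟫_ℂ ^ n) • (1 : ℂ))
          = fun n : ℕ => if n = 0 then (1 : ℂ) else 0 := by
        funext n
        rw [inner_zero_left]
        cases n with
        | zero => simp [ha0]
        | succ n => simp
      rw [h2] at h1
      exact h1.unique (hasSum_ite_eq 0 1)
    have h := hsep (e1 - kv 0) fun z hz => by
      rw [map_sub, he1 z hz, hval z hz, sub_self]
    exact sub_eq_zero.mp h
  have hE : ⟪e1, e1⟫_ℂ = 1 := by
    nth_rewrite 1 [he1k]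
    rw [hker_eval]
    exact he1 0 (by simp)
  have hD0adj : ContinuousLinearMap.adjoint D0 = D0 := hD0pos.isSelfAdjoint.adjoint_eq
  have hD0f : ∀ f : HK, D0 f = ⟪e1, f⟫_ℂ • e1 := by
    intro f
    have hval : ∀ z, ‖z‖ < 1 → ev z (D0 f) = ⟪e1, f⟫_ℂ := by
      intro z hz
      have h2 := ContinuousLinearMap.adjoint_inner_left D0 f (kv z)
      rw [hD0adj, hD0kv z hz] at h2
      rw [← hker_eval, ← h2]
    have h := hsep (D0 f - ⟪e1, f⟫_ℂ • e1) fun z hz => by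
      rw [map_sub, map_smul, hval z hz, he1 z hz, smul_eq_mul, mul_one, sub_self]
    exact sub_eq_zero.mp h
  -- multiplier property of the noncommutative products
  have hQ_eval : ∀ (β : Fin d → ℕ) (s : Finset (Fin d))
      (hcomm : (s : Set (Fin d)).Pairwise (Function.onFun Commute fun i => Mz i ^ β i))
      (z : EuclideanSpace ℂ (Fin d)), ‖z‖ < 1 → ∀ f,
      ev z ((s.noncommProd (fun i => Mz i ^ β i) hcomm) f)
        = (∏ i ∈ s, z i ^ β i) * ev z f := by
    intro β s
    induction s using Finset.induction_on with
    | empty => intro hcomm z hz f; simp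
    | @insert i s hi ih =>
      intro hcomm z hz f
      rw [Finset.noncommProd_insert_of_notMem _ _ _ _ hi, ContinuousLinearMap.mul_apply]
      have hpow : ∀ (k : ℕ) (g : HK), ev z ((Mz i ^ k) g) = z i ^ k * ev z g := by
        intro k
        induction k with
        | zero => intro g; simp
        | succ k ihk =>
          intro g
          rw [pow_succ, ContinuousLinearMap.mul_apply, ihk, hMz i z hz, smul_eq_mul, pow_succ]
          ring
      rw [hpow, ih _ z hz, Finset.prod_insert hi]
      ring
  -- adjoints of the noncommutative products on kernel vectors
  have hQ_adj : ∀ (β : Fin d → ℕ) (w : EuclideanSpace ℂ (Fin d)), ‖w‖ < 1 →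
      (ContinuousLinearMap.adjoint (Finset.univ.noncommProd (fun i => Mz i ^ β i)
        (fun i _ j _ _ => (hMzc i j).pow_pow (β i) (β j)))) (kv w)
        = (∏ i, (starRingEnd ℂ) (w i) ^ β i) • kv w := by
    intro β w hw
    apply ext_inner_right ℂ
    intro f
    rw [ContinuousLinearMap.adjoint_inner_left, hker_eval, hQ_eval β Finset.univ (fun i _ j _ _ => (hMzc i j).pow_pow (β i) (β j)) w hw f,
      inner_smul_left, hker_eval, map_prod]
    simp only [map_pow, Complex.conj_conj]
  refine ⟨fun f => ?_, fun α β w hw => ?_⟩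
  · constructor
    · rw [hD0f f]
      exact Submodule.smul_mem _ _ (Submodule.mem_span_singleton_self e1)
    · rw [Submodule.mem_orthogonal_singleton_iff_inner_right, inner_sub_right, hD0f f,
        inner_smul_right, hE, mul_one, sub_self]
  · rw [hQ_adj β w hw, map_smul, hD0kv w hw, map_smul]
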